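/- Let k ∈ ℕ, ε ∈ (0,1), Δ > 0, and let λ₁, …, λ_n be strictly positive real numbers satisfying Σ_{j=1}^n (λ_j - 1)² ≤ Δ² and Σ_{j=1}^n (1 - 1/λ_j)² ≤ Δ², and assume k Δ² ≤ ε. Then (k/2) · Σ_{j=1}^n ( λ_j - 1 - log(λ_j) ) ≤ ε/2. -/

import Mathlib

theorem expected_privacy_loss_bound (k : ℕ) (n : ℕ) (ε Δ : ℝ)
    (hε : ε ∈ Set.Ioo (0 : ℝ) 1) (hΔ : 0 < Δ)
    (lam : Fin n → ℝ) (hlampos : ∀ j, 0 < lam j)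
    (h1 : ∑ j, (lam j - 1) ^ 2 ≤ Δ ^ 2)
    (h2 : ∑ j, (1 - 1 / lam j) ^ 2 ≤ Δ ^ 2)
    (hkΔ : (k : ℝ) * Δ ^ 2 ≤ ε) :
    ((k : ℝ) / 2) * ∑ j, (lam j - 1 - Real.log (lam j)) ≤ ε / 2 := by
  have key : ∑ j, (lam j - 1 - Real.log (lam j)) ≤ Δ ^ 2 := by
    have hpt : ∀ j, lam j - 1 - Real.log (lam j) ≤
        ((lam j - 1) ^ 2 + (1 - 1 / lam j) ^ 2) / 2 := by
      intro j
      have hpos := hlampos j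
      have hlog : Real.log (1 / lam j) ≤ 1 / lam j - 1 :=
        Real.log_le_sub_one_of_pos (by positivity)
      rw [Real.log_div one_ne_zero (ne_of_gt hpos), Real.log_one] at hlog
      have hlog' : 1 - 1 / lam j ≤ Real.log (lam j) := by linarith
      have hprod : (lam j - 1) * (1 - 1 / lam j) ≤
          ((lam j - 1) ^ 2 + (1 - 1 / lam j) ^ 2) / 2 := by nlinarith [sq_nonneg ((lam j - 1) - (1 - 1 / lam j))]
      have heq : lam j - 1 - (1 - 1 / lam j) = (lam j - 1) * (1 - 1 / lam j) := by
        field_simp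
      linarith
    calc ∑ j, (lam j - 1 - Real.log (lam j))
        ≤ ∑ j, ((lam j - 1) ^ 2 + (1 - 1 / lam j) ^ 2) / 2 :=
          Finset.sum_le_sum fun j _ => hpt j
      _ = (∑ j, (lam j - 1) ^ 2 + ∑ j, (1 - 1 / lam j) ^ 2) / 2 := by
          rw [← Finset.sum_add_distrib, Finset.sum_div]
      _ ≤ Δ ^ 2 := by linarith
  have hk : (0:ℝ) ≤ (k : ℝ) / 2 := by positivity
  have := mul_le_mul_of_nonneg_left key hk
  calc ((k : ℝ) / 2) * ∑ j, (lam j - 1 - Real.log (lam j))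
      ≤ ((k : ℝ) / 2) * Δ ^ 2 := this
    _ ≤ ε / 2 := by linarith
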